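/- A spherical triangle inscribed in a circle of spherical radius r on the unit sphere, whose circumcenter lies inside the triangle, has perimeter at least 4r. -/

import Mathlib

open Real

section Auxiliary

private lemma my_arccos_antitone {x y : ℝ} (h : x ≤ y) : arccos y ≤ arccos x := by
  rw [Real.arccos_eq_pi_div_two_sub_arcsin, Real.arccos_eq_pi_div_two_sub_arcsin]
  have := Real.monotone_arcsin h
  linarith

private lemma my_arccos_add {A B c α β : ℝ} (hα : 0 ≤ α) (hβ : 0 ≤ β)
    (hcm : -1 ≤ c) (hc : c ≤ 1)
    (hA : A = α + β * c) (hB : B = α * c + β)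
    (hn : α ^ 2 + β ^ 2 + 2 * α * β * c = 1) :
    arccos A + arccos B = arccos c := by
  have hd0 : 0 ≤ 1 - c ^ 2 := by nlinarith
  have hprod : 0 ≤ β ^ 2 * (1 - c ^ 2) := mul_nonneg (sq_nonneg β) hd0
  have hprod' : 0 ≤ α ^ 2 * (1 - c ^ 2) := mul_nonneg (sq_nonneg α) hd0
  have h1A : 1 - A ^ 2 = β ^ 2 * (1 - c ^ 2) := by rw [hA]; linear_combination -hn
  have h1B : 1 - B ^ 2 = α ^ 2 * (1 - c ^ 2) := by rw [hB]; linear_combination -hn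
  have hA1 : A ≤ 1 := by nlinarith [sq_nonneg (A - 1)]
  have hAm : -1 ≤ A := by nlinarith [sq_nonneg (A + 1)]
  have hB1 : B ≤ 1 := by nlinarith [sq_nonneg (B - 1)]
  have hBm : -1 ≤ B := by nlinarith [sq_nonneg (B + 1)]
  have hsA : sin (arccos A) = β * Real.sqrt (1 - c ^ 2) := by
    rw [Real.sin_arccos, h1A, Real.sqrt_mul (sq_nonneg β), Real.sqrt_sq hβ]
  have hsB : sin (arccos B) = α * Real.sqrt (1 - c ^ 2) := by
    rw [Real.sin_arccos, h1B, Real.sqrt_mul (sq_nonneg α), Real.sqrt_sq hα]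
  have hss : Real.sqrt (1 - c ^ 2) * Real.sqrt (1 - c ^ 2) = 1 - c ^ 2 :=
    Real.mul_self_sqrt hd0
  have key : β * Real.sqrt (1 - c ^ 2) * (α * Real.sqrt (1 - c ^ 2))
      = α * β * (1 - c ^ 2) := by
    rw [show β * Real.sqrt (1 - c ^ 2) * (α * Real.sqrt (1 - c ^ 2))
        = α * β * (Real.sqrt (1 - c ^ 2) * Real.sqrt (1 - c ^ 2)) from by ring, hss]
  have hcos : cos (arccos A + arccos B) = c := by
    rw [Real.cos_add, Real.cos_arccos hAm hA1, Real.cos_arccos hBm hB1, hsA, hsB,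
      key, hA, hB]
    linear_combination c * hn
  have h0 : 0 ≤ arccos A + arccos B :=
    add_nonneg (Real.arccos_nonneg _) (Real.arccos_nonneg _)
  have hπ : arccos A + arccos B ≤ π := by
    have hAB : -B ≤ A := by
      have : 0 ≤ (α + β) * (1 + c) := mul_nonneg (by linarith) (by linarith)
      rw [hA, hB]; nlinarith
    have := my_arccos_antitone hAB
    rw [Real.arccos_neg] at this
    linarith
  rw [← hcos, Real.arccos_cos h0 hπ]

variable {E : Type*} [NormedAddCommGroup E] [InnerProductSpace ℝ E]

private lemma my_angle_split (x y z : E) (α β : ℝ) (hx : ‖x‖ = 1) (hy : ‖y‖ = 1)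
    (hz : ‖z‖ = 1) (hα : 0 ≤ α) (hβ : 0 ≤ β) (hzdef : z = α • x + β • y) :
    arccos (inner ℝ x z : ℝ) + arccos (inner ℝ z y : ℝ) = arccos (inner ℝ x y : ℝ) := by
  have hxx : (inner ℝ x x : ℝ) = 1 := by
    rw [real_inner_self_eq_norm_sq, hx]; norm_num
  have hyy : (inner ℝ y y : ℝ) = 1 := by
    rw [real_inner_self_eq_norm_sq, hy]; norm_num
  have hc1 : (inner ℝ x y : ℝ) ≤ 1 := by
    have := real_inner_le_norm x y; rw [hx, hy] at this; linarith
  have hcm1 : -1 ≤ (inner ℝ x y : ℝ) := by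
    have := abs_real_inner_le_norm x y; rw [hx, hy] at this
    have := abs_le.1 (by linarith [le_abs_self (inner ℝ x y : ℝ)] : |(inner ℝ x y : ℝ)| ≤ 1)
    exact this.1
  have hA : (inner ℝ x z : ℝ) = α + β * (inner ℝ x y : ℝ) := by
    rw [hzdef, inner_add_right, real_inner_smul_right, real_inner_smul_right, hxx]
    ring
  have hB : (inner ℝ z y : ℝ) = α * (inner ℝ x y : ℝ) + β := by
    rw [hzdef, inner_add_left, real_inner_smul_left, real_inner_smul_left, hyy]
    ring
  have hn : α ^ 2 + β ^ 2 + 2 * α * β * (inner ℝ x y : ℝ) = 1 := by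
    have hzz : (inner ℝ z z : ℝ) = 1 := by
      rw [real_inner_self_eq_norm_sq, hz]; norm_num
    rw [hzdef] at hzz
    simp only [inner_add_left, inner_add_right, real_inner_smul_left,
      real_inner_smul_right, hxx, hyy] at hzz
    rw [real_inner_comm x y] at hzz
    linear_combination hzz
  exact my_arccos_add hα hβ hcm1 hc1 hA hB hn

private lemma my_angle_sum (u₁ u₂ u₃ : E) (h₁ : ‖u₁‖ = 1) (h₂ : ‖u₂‖ = 1)
    (h₃ : ‖u₃‖ = 1) (w₁ w₂ w₃ : ℝ) (hw₁ : 0 ≤ w₁) (hw₂ : 0 ≤ w₂) (hw₃ : 0 ≤ w₃)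
    (hsum : 0 < w₁ + w₂ + w₃) (hcombo : w₁ • u₁ + w₂ • u₂ + w₃ • u₃ = 0) :
    2 * π ≤ arccos (inner ℝ u₁ u₂ : ℝ) + arccos (inner ℝ u₂ u₃ : ℝ) +
      arccos (inner ℝ u₃ u₁ : ℝ) := by
  have key : ∀ a b c : E, ‖a‖ = 1 → ‖b‖ = 1 → ‖c‖ = 1 → ∀ wa wb wc : ℝ,
      0 ≤ wa → 0 ≤ wb → 0 < wc → wa • a + wb • b + wc • c = 0 →
      arccos (inner ℝ a b : ℝ) =
        2 * π - arccos (inner ℝ a c : ℝ) - arccos (inner ℝ c b : ℝ) := by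
    intro a b c ha hb hc wa wb wc hwa hwb hwc hcmb
    have hc' : wc • c = -(wa • a + wb • b) := eq_neg_of_add_eq_zero_right hcmb
    have hzdef : (-c : E) = (wa / wc) • a + (wb / wc) • b := by
      apply smul_right_injective E (ne_of_gt hwc)
      show wc • (-c) = wc • ((wa / wc) • a + (wb / wc) • b)
      have e1 : wc * (wa / wc) = wa := by field_simp
      have e2 : wc * (wb / wc) = wb := by field_simp
      rw [smul_add, smul_smul, smul_smul, e1, e2, smul_neg, hc', neg_neg]
    have hnc : ‖(-c : E)‖ = 1 := by rw [norm_neg]; exact hc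
    have := my_angle_split a b (-c) (wa / wc) (wb / wc) ha hb hnc
      (div_nonneg hwa hwc.le) (div_nonneg hwb hwc.le) hzdef
    rw [inner_neg_right, inner_neg_left, Real.arccos_neg, Real.arccos_neg] at this
    linarith
  have hpos : 0 < w₁ ∨ 0 < w₂ ∨ 0 < w₃ := by
    by_contra h
    push_neg at h
    linarith [h.1, h.2.1, h.2.2]
  rcases hpos with hp | hp | hp
  · have := key u₂ u₃ u₁ h₂ h₃ h₁ w₂ w₃ w₁ hw₂ hw₃ hp (by rw [← hcombo]; abel)
    rw [real_inner_comm u₁ u₂, real_inner_comm u₃ u₁] at this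
    linarith
  · have := key u₃ u₁ u₂ h₃ h₁ h₂ w₃ w₁ w₂ hw₃ hw₁ hp (by rw [← hcombo]; abel)
    rw [real_inner_comm u₂ u₃, real_inner_comm u₁ u₂] at this
    linarith
  · have := key u₁ u₂ u₃ h₁ h₂ h₃ w₁ w₂ w₃ hw₁ hw₂ hp hcombo
    rw [real_inner_comm u₃ u₁, real_inner_comm u₂ u₃] at this
    linarith

private lemma my_concave {k : ℝ} (hk0 : 0 ≤ k) (hk1 : k < 1) :
    ConcaveOn ℝ (Set.Icc 0 (π / 2)) (fun x : ℝ => arcsin (k * sin x)) := by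
  have habs : ∀ x : ℝ, |k * sin x| < 1 := by
    intro x
    rw [abs_mul]
    calc |k| * |sin x| ≤ |k| * 1 := by
          exact mul_le_mul_of_nonneg_left (abs_sin_le_one x) (abs_nonneg k)
      _ = |k| := mul_one _
      _ < 1 := by rwa [abs_of_nonneg hk0]
  have hne1 : ∀ x : ℝ, k * sin x ≠ 1 := fun x h => by
    have := habs x; rw [h] at this; simp at this
  have hnem1 : ∀ x : ℝ, k * sin x ≠ -1 := fun x h => by
    have := habs x; rw [h] at this; simp at this
  have hder : ∀ x : ℝ,
      HasDerivAt (fun x : ℝ => arcsin (k * sin x))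
        (1 / Real.sqrt (1 - (k * sin x) ^ 2) * (k * cos x)) x := by
    intro x
    exact (Real.hasDerivAt_arcsin (hnem1 x) (hne1 x)).comp x
      ((Real.hasDerivAt_sin x).const_mul k)
  have hderiv : deriv (fun x : ℝ => arcsin (k * sin x)) =
      fun x : ℝ => 1 / Real.sqrt (1 - (k * sin x) ^ 2) * (k * cos x) :=
    funext fun x => (hder x).deriv
  apply AntitoneOn.concaveOn_of_deriv (convex_Icc _ _)
  · exact (Real.continuous_arcsin.comp (continuous_const.mul Real.continuous_sin)).continuousOn
  · intro x _
    exact ((hder x).differentiableAt).differentiableWithinAt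
  · rw [hderiv, interior_Icc]
    intro x hx y hy hxy
    have hsq : ∀ z : ℝ, (k * sin z) ^ 2 < 1 := by
      intro z
      nlinarith [abs_nonneg (k * sin z), sq_abs (k * sin z), habs z]
    have hsx : 0 < 1 - (k * sin x) ^ 2 := by linarith [hsq x]
    have hsy : 0 < 1 - (k * sin y) ^ 2 := by linarith [hsq y]
    have hsinxy : sin x ≤ sin y := by
      apply Real.sin_le_sin_of_le_of_le_pi_div_two (by linarith [hx.1, Real.pi_pos])
        hy.2.le hxy
    have hsinx0 : 0 ≤ sin x := Real.sin_nonneg_of_nonneg_of_le_pi hx.1.le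
      (by linarith [hx.2, Real.pi_pos])
    have hsinsq : sin x ^ 2 ≤ sin y ^ 2 := by nlinarith
    have hsqrtx : 0 < Real.sqrt (1 - (k * sin x) ^ 2) := Real.sqrt_pos.2 hsx
    have hsqrty : 0 < Real.sqrt (1 - (k * sin y) ^ 2) := Real.sqrt_pos.2 hsy
    have hcosx0 : 0 ≤ k * cos x := mul_nonneg hk0
      (Real.cos_nonneg_of_mem_Icc ⟨by linarith [hx.1, Real.pi_pos], hx.2.le⟩)
    have hcosy0 : 0 ≤ k * cos y := mul_nonneg hk0
      (Real.cos_nonneg_of_mem_Icc ⟨by linarith [hy.1, Real.pi_pos], hy.2.le⟩)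
    show 1 / Real.sqrt (1 - (k * sin y) ^ 2) * (k * cos y) ≤
      1 / Real.sqrt (1 - (k * sin x) ^ 2) * (k * cos x)
    rw [div_mul_eq_mul_div, div_mul_eq_mul_div, one_mul, one_mul,
      div_le_div_iff₀ hsqrty hsqrtx]
    have hcosle : k * cos y ≤ k * cos x := by
      apply mul_le_mul_of_nonneg_left _ hk0
      apply Real.cos_le_cos_of_nonneg_of_le_pi hx.1.le (by linarith [hy.2, Real.pi_pos]) hxy
    have hA0 : 0 ≤ k * cos y * Real.sqrt (1 - (k * sin x) ^ 2) :=
      mul_nonneg hcosy0 hsqrtx.le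
    have hB0 : 0 ≤ k * cos x * Real.sqrt (1 - (k * sin y) ^ 2) :=
      mul_nonneg hcosx0 hsqrty.le
    rw [← Real.sqrt_sq hA0, ← Real.sqrt_sq hB0]
    apply Real.sqrt_le_sqrt
    have ex : Real.sqrt (1 - (k * sin x) ^ 2) ^ 2 = 1 - (k * sin x) ^ 2 :=
      Real.sq_sqrt hsx.le
    have ey : Real.sqrt (1 - (k * sin y) ^ 2) ^ 2 = 1 - (k * sin y) ^ 2 :=
      Real.sq_sqrt hsy.le
    have key : 0 ≤ k ^ 2 * (1 - k ^ 2) * (sin y ^ 2 - sin x ^ 2) := by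
      apply mul_nonneg (mul_nonneg (sq_nonneg k) (by nlinarith)) (by linarith)
    have hcx : cos x ^ 2 = 1 - sin x ^ 2 := Real.cos_sq' x
    have hcy : cos y ^ 2 = 1 - sin y ^ 2 := Real.cos_sq' y
    have expA : (k * cos y * Real.sqrt (1 - (k * sin x) ^ 2)) ^ 2
        = k ^ 2 * cos y ^ 2 * (1 - (k * sin x) ^ 2) := by
      rw [mul_pow (k * cos y), ex]; ring
    have expB : (k * cos x * Real.sqrt (1 - (k * sin y) ^ 2)) ^ 2
        = k ^ 2 * cos x ^ 2 * (1 - (k * sin y) ^ 2) := by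
      rw [mul_pow (k * cos x), ey]; ring
    rw [expA, expB, hcx, hcy]
    nlinarith [key]

private lemma my_key_bound {r t : ℝ} (hr : 0 < r) (hr' : r < π / 2) (ht0 : 0 ≤ t)
    (htπ : t ≤ π) : 2 * r * t / π ≤ arccos (cos r ^ 2 + sin r ^ 2 * cos t) := by
  have hπ : (0 : ℝ) < π := Real.pi_pos
  set k := sin r with hk
  have hk0 : 0 < k := Real.sin_pos_of_pos_of_lt_pi hr (by linarith)
  have hk1 : k < 1 := by
    have := Real.strictMonoOn_sin (a := r) (b := π / 2)
      ⟨by linarith, by linarith⟩ ⟨by linarith, le_refl _⟩ hr'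
    simpa using this
  set s := k * sin (t / 2) with hs
  have hsin0 : 0 ≤ sin (t / 2) := Real.sin_nonneg_of_nonneg_of_le_pi (by linarith)
    (by linarith)
  have hsin1 : sin (t / 2) ≤ 1 := Real.sin_le_one _
  have hs0 : 0 ≤ s := mul_nonneg hk0.le hsin0
  have hs1 : s ≤ 1 := by nlinarith
  have hcost : cos t = 1 - 2 * sin (t / 2) ^ 2 := by
    have h1 := Real.cos_two_mul (t / 2)
    have h2 := Real.sin_sq_add_cos_sq (t / 2)
    have h3 : (2 : ℝ) * (t / 2) = t := by ring
    rw [h3] at h1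
    linarith
  have hstep1 : cos r ^ 2 + sin r ^ 2 * cos t = 1 - 2 * s ^ 2 := by
    have h3 := Real.sin_sq_add_cos_sq r
    rw [hcost, hs]; ring_nf; nlinarith [h3]
  have harcsin0 : 0 ≤ arcsin s := Real.arcsin_nonneg.2 hs0
  have harcsin2 : arcsin s ≤ π / 2 := Real.arcsin_le_pi_div_two s
  have hstep2 : arccos (1 - 2 * s ^ 2) = 2 * arcsin s := by
    have hcos2 : cos (2 * arcsin s) = 1 - 2 * s ^ 2 := by
      rw [Real.cos_two_mul]
      have hsin : sin (arcsin s) = s := Real.sin_arcsin (by linarith) hs1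
      have := Real.sin_sq_add_cos_sq (arcsin s)
      nlinarith [hsin]
    rw [← hcos2, Real.arccos_cos (by linarith) (by linarith)]
  have hcc := my_concave hk0.le hk1
  have hmem0 : (0 : ℝ) ∈ Set.Icc 0 (π / 2) := ⟨le_refl _, by linarith⟩
  have hmemπ : (π / 2 : ℝ) ∈ Set.Icc 0 (π / 2) := ⟨by linarith, le_refl _⟩
  have ha : 0 ≤ 1 - t / π := by
    rw [sub_nonneg, div_le_one hπ]; exact htπ
  have hb : 0 ≤ t / π := div_nonneg ht0 hπ.le
  have hab : (1 - t / π) + t / π = 1 := by ring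
  have hchord := hcc.2 hmem0 hmemπ ha hb hab
  have hpt : (1 - t / π) • (0 : ℝ) + (t / π) • (π / 2) = t / 2 := by
    rw [smul_eq_mul, smul_eq_mul, mul_zero, zero_add, div_mul_div_comm, mul_comm t π,
      mul_div_mul_left _ _ hπ.ne']
  rw [hpt] at hchord
  simp only [smul_eq_mul] at hchord
  have hg0 : arcsin (k * sin 0) = 0 := by simp
  have hgπ : arcsin (k * sin (π / 2)) = r := by
    rw [Real.sin_pi_div_two, mul_one, hk, Real.arcsin_sin (by linarith) (by linarith)]
  rw [hg0, hgπ] at hchord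
  rw [hstep1, hstep2]
  have : t / π * r ≤ arcsin s := by
    calc t / π * r = (1 - t / π) * 0 + t / π * r := by ring
      _ ≤ arcsin (k * sin (t / 2)) := hchord
      _ = arcsin s := by rw [hs]
  calc 2 * r * t / π = 2 * (t / π * r) := by ring
    _ ≤ 2 * arcsin s := by linarith

private lemma my_inner_u (o a b : E) (r : ℝ) (ho : ‖o‖ = 1)
    (ha : (inner ℝ o a : ℝ) = cos r) (hb : (inner ℝ o b : ℝ) = cos r)
    (hs : sin r ≠ 0) :
    (inner ℝ ((sin r)⁻¹ • (a - cos r • o)) ((sin r)⁻¹ • (b - cos r • o)) : ℝ)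
      = ((inner ℝ a b : ℝ) - cos r ^ 2) / sin r ^ 2 := by
  have hoo : (inner ℝ o o : ℝ) = 1 := by
    rw [real_inner_self_eq_norm_sq, ho]; norm_num
  have hao : (inner ℝ a o : ℝ) = cos r := by rw [real_inner_comm o a]; exact ha
  simp only [real_inner_smul_left, real_inner_smul_right, inner_sub_left,
    inner_sub_right, hoo, hao, hb]
  field_simp
  ring

end Auxiliary

/-- A spherical triangle inscribed in a circle of spherical radius r < π/2 whose
center lies in the (closed) triangle has perimeter at least 4r. -/
theorem inscribed_spherical_triangle_perimeter
    (o v₁ v₂ v₃ : EuclideanSpace ℝ (Fin 3)) (r : ℝ)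
    (ho : ‖o‖ = 1) (h₁ : ‖v₁‖ = 1) (h₂ : ‖v₂‖ = 1) (h₃ : ‖v₃‖ = 1)
    (hr : 0 < r) (hr' : r < π / 2)
    (hd₁ : arccos (inner ℝ o v₁ : ℝ) = r)
    (hd₂ : arccos (inner ℝ o v₂ : ℝ) = r)
    (hd₃ : arccos (inner ℝ o v₃ : ℝ) = r)
    (hin : ∃ w₁ w₂ w₃ : ℝ, 0 ≤ w₁ ∧ 0 ≤ w₂ ∧ 0 ≤ w₃ ∧
      ∃ lam : ℝ, 0 < lam ∧ w₁ • v₁ + w₂ • v₂ + w₃ • v₃ = lam • o) :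
    4 * r ≤ arccos (inner ℝ v₁ v₂ : ℝ) + arccos (inner ℝ v₂ v₃ : ℝ) +
      arccos (inner ℝ v₃ v₁ : ℝ) := by
  have hπ : (0 : ℝ) < π := Real.pi_pos
  have hcosr : 0 < cos r := Real.cos_pos_of_mem_Ioo ⟨by linarith, hr'⟩
  have hsinr : 0 < sin r := Real.sin_pos_of_pos_of_lt_pi hr (by linarith)
  -- inner products with o are cos r
  have hov : ∀ v : EuclideanSpace ℝ (Fin 3), ‖v‖ = 1 →
      arccos (inner ℝ o v : ℝ) = r → (inner ℝ o v : ℝ) = cos r := by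
    intro v hv hd
    have hle : (inner ℝ o v : ℝ) ≤ 1 := by
      have := real_inner_le_norm o v; rw [ho, hv] at this; linarith
    have hge : -1 ≤ (inner ℝ o v : ℝ) := by
      have := abs_real_inner_le_norm o v; rw [ho, hv] at this
      have := abs_le.1 (by linarith [le_abs_self (inner ℝ o v : ℝ)] :
        |(inner ℝ o v : ℝ)| ≤ 1)
      exact this.1
    rw [← hd, Real.cos_arccos hge hle]
  have ho1 : (inner ℝ o v₁ : ℝ) = cos r := hov v₁ h₁ hd₁
  have ho2 : (inner ℝ o v₂ : ℝ) = cos r := hov v₂ h₂ hd₂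
  have ho3 : (inner ℝ o v₃ : ℝ) = cos r := hov v₃ h₃ hd₃
  -- the projected unit vectors
  set u₁ : EuclideanSpace ℝ (Fin 3) := (sin r)⁻¹ • (v₁ - cos r • o) with hu₁
  set u₂ : EuclideanSpace ℝ (Fin 3) := (sin r)⁻¹ • (v₂ - cos r • o) with hu₂
  set u₃ : EuclideanSpace ℝ (Fin 3) := (sin r)⁻¹ • (v₃ - cos r • o) with hu₃
  have hs2 : (0 : ℝ) < sin r ^ 2 := by positivity
  have hpyth : sin r ^ 2 = 1 - cos r ^ 2 := by
    have := Real.sin_sq_add_cos_sq r; linarith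
  have hnorm : ∀ v : EuclideanSpace ℝ (Fin 3), ‖v‖ = 1 →
      (inner ℝ o v : ℝ) = cos r → ‖(sin r)⁻¹ • (v - cos r • o)‖ = 1 := by
    intro v hv hvo
    have hvv : (inner ℝ v v : ℝ) = 1 := by
      rw [real_inner_self_eq_norm_sq, hv]; norm_num
    have := my_inner_u o v v r ho hvo hvo (ne_of_gt hsinr)
    rw [hvv] at this
    have hsq : ‖(sin r)⁻¹ • (v - cos r • o)‖ ^ 2 = 1 := by
      rw [← real_inner_self_eq_norm_sq, this, ← hpyth]
      exact div_self (ne_of_gt hs2)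
    rw [← Real.sqrt_sq (norm_nonneg ((sin r)⁻¹ • (v - cos r • o))), hsq, Real.sqrt_one]
  have hn₁ : ‖u₁‖ = 1 := hnorm v₁ h₁ ho1
  have hn₂ : ‖u₂‖ = 1 := hnorm v₂ h₂ ho2
  have hn₃ : ‖u₃‖ = 1 := hnorm v₃ h₃ ho3
  -- inner products between the u's and between the v's
  have hi12 : (inner ℝ u₁ u₂ : ℝ) = ((inner ℝ v₁ v₂ : ℝ) - cos r ^ 2) / sin r ^ 2 :=
    my_inner_u o v₁ v₂ r ho ho1 ho2 (ne_of_gt hsinr)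
  have hi23 : (inner ℝ u₂ u₃ : ℝ) = ((inner ℝ v₂ v₃ : ℝ) - cos r ^ 2) / sin r ^ 2 :=
    my_inner_u o v₂ v₃ r ho ho2 ho3 (ne_of_gt hsinr)
  have hi31 : (inner ℝ u₃ u₁ : ℝ) = ((inner ℝ v₃ v₁ : ℝ) - cos r ^ 2) / sin r ^ 2 :=
    my_inner_u o v₃ v₁ r ho ho3 ho1 (ne_of_gt hsinr)
  have hv12 : (inner ℝ v₁ v₂ : ℝ) = cos r ^ 2 + sin r ^ 2 * (inner ℝ u₁ u₂ : ℝ) := by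
    rw [hi12]; field_simp; ring
  have hv23 : (inner ℝ v₂ v₃ : ℝ) = cos r ^ 2 + sin r ^ 2 * (inner ℝ u₂ u₃ : ℝ) := by
    rw [hi23]; field_simp; ring
  have hv31 : (inner ℝ v₃ v₁ : ℝ) = cos r ^ 2 + sin r ^ 2 * (inner ℝ u₃ u₁ : ℝ) := by
    rw [hi31]; field_simp; ring
  -- inner product bounds for the u's
  have hbnd : ∀ a b : EuclideanSpace ℝ (Fin 3), ‖a‖ = 1 → ‖b‖ = 1 →
      -1 ≤ (inner ℝ a b : ℝ) ∧ (inner ℝ a b : ℝ) ≤ 1 := by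
    intro a b hav hbv
    have hle := real_inner_le_norm a b
    have habs := abs_real_inner_le_norm a b
    rw [hav, hbv] at hle habs
    have := abs_le.1 (by linarith [le_abs_self (inner ℝ a b : ℝ)] :
      |(inner ℝ a b : ℝ)| ≤ 1)
    exact ⟨this.1, by linarith⟩
  obtain ⟨hb12m, hb12⟩ := hbnd u₁ u₂ hn₁ hn₂
  obtain ⟨hb23m, hb23⟩ := hbnd u₂ u₃ hn₂ hn₃
  obtain ⟨hb31m, hb31⟩ := hbnd u₃ u₁ hn₃ hn₁
  -- extract the convex combination for the u's
  obtain ⟨w₁, w₂, w₃, hw₁, hw₂, hw₃, lam, hlam, hcombo⟩ := hin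
  have hlam' : (w₁ + w₂ + w₃) * cos r = lam := by
    have := congrArg (fun v : EuclideanSpace ℝ (Fin 3) => (inner ℝ o v : ℝ)) hcombo
    simp only [inner_add_right, real_inner_smul_right, ho1, ho2, ho3] at this
    have hoo : (inner ℝ o o : ℝ) = 1 := by
      rw [real_inner_self_eq_norm_sq, ho]; norm_num
    rw [hoo] at this
    linarith
  have hsumw : 0 < w₁ + w₂ + w₃ := by nlinarith
  have hucombo : w₁ • u₁ + w₂ • u₂ + w₃ • u₃ = 0 := by
    have hexp : w₁ • u₁ + w₂ • u₂ + w₃ • u₃ =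
        (sin r)⁻¹ • ((w₁ • v₁ + w₂ • v₂ + w₃ • v₃) -
          ((w₁ + w₂ + w₃) * cos r) • o) := by
      rw [hu₁, hu₂, hu₃]
      module
    rw [hexp, hcombo, hlam', sub_self, smul_zero]
  -- the central angles
  set φ₁₂ := arccos (inner ℝ u₁ u₂ : ℝ) with hφ₁₂
  set φ₂₃ := arccos (inner ℝ u₂ u₃ : ℝ) with hφ₂₃
  set φ₃₁ := arccos (inner ℝ u₃ u₁ : ℝ) with hφ₃₁
  have hsumφ : 2 * π ≤ φ₁₂ + φ₂₃ + φ₃₁ :=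
    my_angle_sum u₁ u₂ u₃ hn₁ hn₂ hn₃ w₁ w₂ w₃ hw₁ hw₂ hw₃ hsumw hucombo
  -- rewrite the sides using the central angles
  have hside : ∀ c : ℝ, -1 ≤ c → c ≤ 1 →
      cos r ^ 2 + sin r ^ 2 * c = cos r ^ 2 + sin r ^ 2 * cos (arccos c) := by
    intro c hm h1'
    rw [Real.cos_arccos hm h1']
  have hkb12 : 2 * r * φ₁₂ / π ≤ arccos (inner ℝ v₁ v₂ : ℝ) := by
    rw [hv12, hside _ hb12m hb12]
    exact my_key_bound hr hr' (Real.arccos_nonneg _) (Real.arccos_le_pi _)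
  have hkb23 : 2 * r * φ₂₃ / π ≤ arccos (inner ℝ v₂ v₃ : ℝ) := by
    rw [hv23, hside _ hb23m hb23]
    exact my_key_bound hr hr' (Real.arccos_nonneg _) (Real.arccos_le_pi _)
  have hkb31 : 2 * r * φ₃₁ / π ≤ arccos (inner ℝ v₃ v₁ : ℝ) := by
    rw [hv31, hside _ hb31m hb31]
    exact my_key_bound hr hr' (Real.arccos_nonneg _) (Real.arccos_le_pi _)
  -- combine
  have hrπ : 0 ≤ 2 * r / π := by positivity
  have hmul := mul_le_mul_of_nonneg_left hsumφ hrπ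
  have he1 : 2 * r / π * (2 * π) = 4 * r := by field_simp; ring
  have he2 : 2 * r / π * (φ₁₂ + φ₂₃ + φ₃₁) =
      2 * r * φ₁₂ / π + 2 * r * φ₂₃ / π + 2 * r * φ₃₁ / π := by
    field_simp
  rw [he1, he2] at hmul
  linarith
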